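/- arXiv:0706.0431 — 5 statements merged into one kernel-verified Lean document; each statement's English description precedes it below -/
import Mathlib

section
/- Let ℓ ≥ 1, p ≥ 1 and q ≥ 0 be integers. Then there exists an integer P ≥ 1 such that val_ℓ(n + P·e_i) ≡ val_ℓ(n) (mod p) for every n ∈ ℕ^ℓ and every i ∈ {1,…,ℓ}, where e_i denotes the i-th canonical basis vector of ℕ^ℓ. Consequently, the set rep_ℓ({q + kp : k ∈ ℕ}) = {n ∈ ℕ^ℓ : val_ℓ(n) ∈ {q + kp : k ∈ ℕ}} is a finite union of linear sets of the form x + ℕ·P·e_1 + ⋯ + ℕ·P·e_ℓ with x ∈ ℕ^ℓ. -/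
/-- `valB ℓ n = Σ_{i=1}^{ℓ} C(n_i + ⋯ + n_ℓ + ℓ − i, ℓ − i + 1)` (0-based indexing). -/
def valB (ℓ : ℕ) (n : Fin ℓ → ℕ) : ℕ :=
  ∑ i : Fin ℓ,
    Nat.choose ((∑ j ∈ Finset.univ.filter (fun j => i ≤ j), n j) + (ℓ - 1 - (i : ℕ)))
      (ℓ - (i : ℕ))

private lemma modeq_sum {α : Type*} {p : ℕ} (s : Finset α) (f g : α → ℕ)
    (h : ∀ a ∈ s, f a ≡ g a [MOD p]) : ∑ a ∈ s, f a ≡ ∑ a ∈ s, g a [MOD p] := by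
  classical
  induction s using Finset.induction_on with
  | empty => rfl
  | @insert a s ha ih =>
    rw [Finset.sum_insert ha, Finset.sum_insert ha]
    exact Nat.ModEq.add (h _ (Finset.mem_insert_self _ _))
      (ih fun a has => h a (Finset.mem_insert_of_mem has))

private lemma p_dvd_choose (p L j : ℕ) (hj1 : 1 ≤ j) (hjL : j ≤ L) :
    p ∣ (p * L.factorial).choose j := by
  obtain ⟨t, ht⟩ := Nat.dvd_factorial hj1 hjL
  obtain ⟨j, rfl⟩ : ∃ j', j = j' + 1 := ⟨j - 1, by omega⟩
  rcases Nat.eq_zero_or_pos (p * L.factorial) with h | h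
  · rw [h, Nat.choose_eq_zero_of_lt (by omega)]; exact dvd_zero p
  obtain ⟨n, hn⟩ : ∃ n, p * L.factorial = n + 1 := ⟨p * L.factorial - 1, by omega⟩
  have key := Nat.add_one_mul_choose_eq n j
  -- (n+1) * choose n j = choose (n+1) (j+1) * (j+1)
  have h2 : (n + 1) * Nat.choose n j = (p * t) * (j + 1) * Nat.choose n j := by
    rw [← hn, ht]; ring
  have h3 : (n + 1).choose (j + 1) * (j + 1) = ((p * t) * Nat.choose n j) * (j + 1) := by
    rw [← key, h2]; ring
  have h4 : (n + 1).choose (j + 1) = (p * t) * Nat.choose n j :=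
    Nat.eq_of_mul_eq_mul_right (by omega) h3
  rw [hn, h4]
  exact ⟨t * Nat.choose n j, by ring⟩

private lemma choose_add_period (p L x k : ℕ) (hk1 : 1 ≤ k) (hkL : k ≤ L) :
    (x + p * L.factorial).choose k ≡ x.choose k [MOD p] := by
  rw [Nat.add_choose_eq]
  have hmem : (k, 0) ∈ Finset.HasAntidiagonal.antidiagonal k := by simp
  rw [← Finset.add_sum_erase _ _ hmem]
  have hdvd : p ∣ ∑ ij ∈ (Finset.HasAntidiagonal.antidiagonal k).erase (k, 0),
      x.choose ij.1 * (p * L.factorial).choose ij.2 := by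
    refine Finset.dvd_sum fun ij hij => ?_
    obtain ⟨hne, hij⟩ := Finset.mem_erase.mp hij
    rw [Finset.HasAntidiagonal.mem_antidiagonal] at hij
    have hj1 : 1 ≤ ij.2 := by
      rcases Nat.eq_zero_or_pos ij.2 with h | h
      · exact absurd (Prod.ext (by omega) h) hne
      · exact h
    exact Dvd.dvd.mul_left (p_dvd_choose p L ij.2 hj1 (by omega)) _
  obtain ⟨c, hc⟩ := hdvd
  simp only [Nat.choose_zero_right, mul_one, hc]
  show x.choose k + p * c ≡ x.choose k [MOD p]
  conv_rhs => rw [← Nat.add_zero (x.choose k)]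
  exact Nat.ModEq.add_left _ (Nat.modEq_zero_iff_dvd.mpr ⟨c, rfl⟩)

private lemma sum_update_tail (ℓ : ℕ) (n : Fin ℓ → ℕ) (i i' : Fin ℓ) (a : ℕ) :
    (∑ j ∈ Finset.univ.filter (fun j => i' ≤ j), Function.update n i (n i + a) j)
      = (∑ j ∈ Finset.univ.filter (fun j => i' ≤ j), n j) + (if i' ≤ i then a else 0) := by
  classical
  by_cases h : i' ≤ i
  · have hmem : i ∈ Finset.univ.filter (fun j => i' ≤ j) := by simp [h]
    rw [Finset.sum_update_of_mem hmem, ← Finset.add_sum_erase _ n hmem, if_pos h,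
      Finset.erase_eq]
    ring
  · have hmem : i ∉ Finset.univ.filter (fun j => i' ≤ j) := by simp [h]
    rw [Finset.sum_update_of_notMem hmem, if_neg h, Nat.add_zero]

private lemma valB_step (ℓ p : ℕ) (n : Fin ℓ → ℕ) (i : Fin ℓ) :
    valB ℓ (Function.update n i (n i + p * ℓ.factorial)) ≡ valB ℓ n [MOD p] := by
  unfold valB
  refine modeq_sum _ _ _ fun i' _ => ?_
  rw [sum_update_tail]
  by_cases h : i' ≤ i
  · rw [if_pos h]
    have h1 : (∑ j ∈ Finset.univ.filter (fun j => i' ≤ j), n j) + p * ℓ.factorial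
        + (ℓ - 1 - (i' : ℕ))
        = ((∑ j ∈ Finset.univ.filter (fun j => i' ≤ j), n j) + (ℓ - 1 - (i' : ℕ)))
          + p * ℓ.factorial := by ring
    rw [h1]
    exact choose_add_period p ℓ _ _ (by omega) (by omega)
  · rw [if_neg h, Nat.add_zero]

private lemma valB_stepT (ℓ p : ℕ) (n : Fin ℓ → ℕ) (i : Fin ℓ) (t : ℕ) :
    valB ℓ (Function.update n i (n i + p * ℓ.factorial * t)) ≡ valB ℓ n [MOD p] := by
  induction t with
  | zero =>
    simp only [Nat.mul_zero, Nat.add_zero, Function.update_eq_self]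
    exact Nat.ModEq.refl _
  | succ t ih =>
    have h := valB_step ℓ p (Function.update n i (n i + p * ℓ.factorial * t)) i
    rw [Function.update_self, Function.update_idem] at h
    have he : n i + p * ℓ.factorial * t + p * ℓ.factorial
        = n i + p * ℓ.factorial * (t + 1) := by ring
    rw [he] at h
    exact h.trans ih

private lemma valB_multi (ℓ p : ℕ) (n k : Fin ℓ → ℕ) :
    valB ℓ (fun j => n j + p * ℓ.factorial * k j) ≡ valB ℓ n [MOD p] := by
  classical
  have key : ∀ s : Finset (Fin ℓ),
      valB ℓ (fun j => if j ∈ s then n j + p * ℓ.factorial * k j else n j)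
        ≡ valB ℓ n [MOD p] := by
    intro s
    induction s using Finset.induction_on with
    | empty => exact Nat.ModEq.refl _
    | @insert a s ha ih =>
      have heq : (fun j => if j ∈ insert a s then n j + p * ℓ.factorial * k j else n j)
          = Function.update (fun j => if j ∈ s then n j + p * ℓ.factorial * k j else n j) a
            ((fun j => if j ∈ s then n j + p * ℓ.factorial * k j else n j) a
              + p * ℓ.factorial * k a) := by
        funext j
        rcases eq_or_ne j a with rfl | hj
        · simp [ha]
        · simp [Function.update_of_ne hj, Finset.mem_insert, hj]
      rw [heq]
      exact (valB_stepT ℓ p _ a (k a)).trans ih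
  have h := key Finset.univ
  simpa using h

private lemma valB_mono (ℓ : ℕ) (n m : Fin ℓ → ℕ) (h : ∀ j, n j ≤ m j) :
    valB ℓ n ≤ valB ℓ m := by
  refine Finset.sum_le_sum fun i _ => Nat.choose_le_choose _ ?_
  exact Nat.add_le_add_right (Finset.sum_le_sum fun j _ => h j) _

private lemma choose_lb : ∀ (s c : ℕ), s ≤ (s + c).choose (c + 1) := by
  intro s
  induction s with
  | zero => intro c; exact Nat.zero_le _
  | succ s ih =>
    intro c
    have he : s + 1 + c = (s + c) + 1 := by ring
    rw [he, Nat.choose_succ_succ]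
    simp only [Nat.succ_eq_add_one]
    have h1 : 1 ≤ (s + c).choose c := Nat.choose_pos (by omega)
    have := ih c
    omega

private lemma valB_lb (ℓ : ℕ) (n : Fin ℓ → ℕ) (i : Fin ℓ) : n i ≤ valB ℓ n := by
  have hmem : i ∈ Finset.univ.filter (fun j => i ≤ j) := by simp
  have hs : n i ≤ ∑ j ∈ Finset.univ.filter (fun j => i ≤ j), n j :=
    Finset.single_le_sum (fun j _ => Nat.zero_le _) hmem
  have hi : (i : ℕ) < ℓ := i.isLt
  have hterm : n i ≤ Nat.choose
      ((∑ j ∈ Finset.univ.filter (fun j => i ≤ j), n j) + (ℓ - 1 - (i : ℕ)))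
      (ℓ - (i : ℕ)) := by
    have h2 : ℓ - (i : ℕ) = (ℓ - 1 - (i : ℕ)) + 1 := by omega
    rw [h2]
    calc n i ≤ ∑ j ∈ Finset.univ.filter (fun j => i ≤ j), n j := hs
      _ ≤ _ := choose_lb _ _
  refine le_trans hterm ?_
  unfold valB
  exact Finset.single_le_sum
    (f := fun i : Fin ℓ => (∑ j ∈ Finset.univ.filter (fun j => i ≤ j), n j
      + (ℓ - 1 - (i : ℕ))).choose (ℓ - (i : ℕ)))
    (fun j _ => Nat.zero_le _) (Finset.mem_univ i)

private def redF (P q : ℕ) {ℓ : ℕ} (n : Fin ℓ → ℕ) : Fin ℓ → ℕ :=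
  fun i => if n i < q + P then n i else q + (n i - q) % P

private def kredF (P q : ℕ) {ℓ : ℕ} (n : Fin ℓ → ℕ) : Fin ℓ → ℕ :=
  fun i => if n i < q + P then 0 else (n i - q) / P

private lemma redF_decomp (P q : ℕ) {ℓ : ℕ} (n : Fin ℓ → ℕ) (i : Fin ℓ) :
    n i = redF P q n i + P * kredF P q n i := by
  unfold redF kredF
  by_cases h : n i < q + P
  · simp [h]
  · rw [if_neg h, if_neg h]
    have hq : q ≤ n i := by omega
    calc n i = q + (n i - q) := by omega
      _ = q + ((n i - q) % P + P * ((n i - q) / P)) := by rw [Nat.mod_add_div]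
      _ = q + (n i - q) % P + P * ((n i - q) / P) := by ring

private lemma redF_lt (P q : ℕ) (hP : 1 ≤ P) {ℓ : ℕ} (n : Fin ℓ → ℕ) (i : Fin ℓ) :
    redF P q n i < q + P := by
  unfold redF
  by_cases h : n i < q + P
  · rwa [if_pos h]
  · rw [if_neg h]
    have := Nat.mod_lt (n i - q) (show 0 < P by omega)
    omega

/-- There is a period `P ≥ 1` such that `valB ℓ` is invariant modulo `p` under adding `P`
to any single coordinate; consequently the set of `B_ℓ`-representations of an arithmetic
progression is a finite union of linear sets with periods `P·e_1, …, P·e_ℓ`. -/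
theorem repB_arithmetic_progression_semilinear (ℓ p q : ℕ) (hℓ : 1 ≤ ℓ) (hp : 1 ≤ p) :
    ∃ P : ℕ, 1 ≤ P ∧
      (∀ (n : Fin ℓ → ℕ) (i : Fin ℓ),
        valB ℓ (Function.update n i (n i + P)) ≡ valB ℓ n [MOD p]) ∧
      (∃ (m : ℕ) (x : Fin m → Fin ℓ → ℕ),
        {n : Fin ℓ → ℕ | ∃ k : ℕ, valB ℓ n = q + k * p} =
          ⋃ r : Fin m, {n : Fin ℓ → ℕ | ∃ k : Fin ℓ → ℕ, ∀ i, n i = x r i + P * k i}) := by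
  classical
  have hP : 1 ≤ p * ℓ.factorial := Nat.mul_pos hp (Nat.factorial_pos ℓ)
  refine ⟨p * ℓ.factorial, hP, fun n i => valB_step ℓ p n i, ?_⟩
  set P := p * ℓ.factorial with hPdef
  -- membership characterization
  have memS : ∀ n : Fin ℓ → ℕ, (∃ k, valB ℓ n = q + k * p) ↔
      (q ≤ valB ℓ n ∧ valB ℓ n ≡ q [MOD p]) := by
    intro n
    constructor
    · rintro ⟨k, hk⟩
      refine ⟨by omega, ?_⟩
      show valB ℓ n % p = q % p
      rw [hk]
      exact Nat.add_mul_mod_self_right q k p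
    · rintro ⟨hq, hmod⟩
      obtain ⟨k, hk⟩ := (Nat.modEq_iff_dvd' hq).mp hmod.symm
      have h := Nat.sub_add_cancel hq
      rw [hk] at h
      exact ⟨k, by rw [← h]; ring⟩
  -- valB is mod-p invariant under reduction
  have hmod_red : ∀ n : Fin ℓ → ℕ, valB ℓ n ≡ valB ℓ (redF P q n) [MOD p] := by
    intro n
    have h := valB_multi ℓ p (redF P q n) (kredF P q n)
    have he : (fun j => redF P q n j + p * ℓ.factorial * kredF P q n j) = n :=
      funext fun i => (redF_decomp P q n i).symm
    rw [he] at h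
    exact h
  -- reduction stays in S
  have hS_red : ∀ n : Fin ℓ → ℕ, (∃ k, valB ℓ n = q + k * p) →
      (∃ k, valB ℓ (redF P q n) = q + k * p) := by
    intro n hn
    rw [memS] at hn ⊢
    refine ⟨?_, (hmod_red n).symm.trans hn.2⟩
    by_cases hall : ∀ i, n i < q + P
    · have hrn : redF P q n = n := funext fun i => by
        unfold redF; rw [if_pos (hall i)]
      rw [hrn]; exact hn.1
    · push_neg at hall
      obtain ⟨i, hi⟩ := hall
      have h1 : q ≤ redF P q n i := by
        unfold redF; rw [if_neg (by omega)]; omega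
      exact le_trans h1 (valB_lb ℓ _ i)
  by_cases hF : ∃ x : Fin ℓ → ℕ, (∀ i, x i < q + P) ∧ (∃ k, valB ℓ x = q + k * p)
  · -- nonempty case
    obtain ⟨x₀, hx₀lt, hx₀S⟩ := hF
    set e := Fintype.equivFin (Fin ℓ → Fin (q + P)) with hedef
    refine ⟨Fintype.card (Fin ℓ → Fin (q + P)),
      fun r => if (∃ k, valB ℓ (fun i => ((e.symm r) i : ℕ)) = q + k * p)
        then (fun i => ((e.symm r) i : ℕ)) else x₀, ?_⟩
    ext n
    simp only [Set.mem_setOf_eq, Set.mem_iUnion]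
    constructor
    · intro hn
      have hr : ∃ k, valB ℓ (redF P q n) = q + k * p := hS_red n hn
      set y : Fin ℓ → Fin (q + P) := fun i => ⟨redF P q n i, redF_lt P q hP n i⟩ with hy
      refine ⟨e y, kredF P q n, fun i => ?_⟩
      rw [Equiv.symm_apply_apply]
      have hcoe : (fun i => ((y i : ℕ))) = redF P q n := rfl
      rw [hcoe, if_pos hr]
      exact redF_decomp P q n i
    · rintro ⟨r, k, hk⟩
      set w := if (∃ k, valB ℓ (fun i => ((e.symm r) i : ℕ)) = q + k * p)
        then (fun i => ((e.symm r) i : ℕ)) else x₀ with hw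
      have hwS : ∃ kk, valB ℓ w = q + kk * p := by
        rw [hw]; split
        · assumption
        · exact hx₀S
      have hn_eq : n = fun j => w j + p * ℓ.factorial * k j := funext hk
      rw [memS]
      rw [memS] at hwS
      constructor
      · refine le_trans hwS.1 (valB_mono ℓ w n fun j => ?_)
        rw [hk j]
        exact Nat.le_add_right _ _
      · have h := valB_multi ℓ p w k
        rw [← hn_eq] at h
        exact h.trans hwS.2
  · -- empty case
    refine ⟨0, Fin.elim0, ?_⟩
    have hempty : ∀ n : Fin ℓ → ℕ, ¬ (∃ k, valB ℓ n = q + k * p) := fun n hn =>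
      hF ⟨redF P q n, fun i => redF_lt P q hP n i, hS_red n hn⟩
    ext n
    simp only [Set.mem_setOf_eq, Set.mem_iUnion]
    constructor
    · intro hn; exact absurd hn (hempty n)
    · rintro ⟨r, -⟩; exact r.elim0
end

section
/- Let ℓ ≥ 1 and β ≥ 1 be integers, and for n ∈ ℕ let |rep_ℓ(n)| denote the coordinate sum of rep_ℓ(n) (the length of the B_ℓ-representation of n). Then there exists N such that for every n ≥ N there exists i ∈ {0, 1, …, β} with |rep_ℓ(β^ℓ·n)| = β·|rep_ℓ(n)| + ⌈(β−1)(ℓ+1)/2⌉ − i. -/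
/-- `repB ℓ` is the inverse of the bijection `valB ℓ`. -/
noncomputable def repB (ℓ : ℕ) : ℕ → (Fin ℓ → ℕ) := Function.invFun (valB ℓ)

section AuxRepB
open Finset
set_option maxHeartbeats 1000000

lemma succ_le_choose (t k : ℕ) : t ≤ (t + k).choose (k+1) := by
  induction t with
  | zero => simp
  | succ t ih =>
      have h : (t + 1 + k) = (t + k) + 1 := by omega
      rw [h, Nat.choose_succ_succ']
      have := Nat.choose_pos (show k ≤ t + k by omega)
      omega

lemma prodF (r : ℕ) : ∀ m : ℕ, (m + r).choose (r+1) * Nat.factorial (r+1) = ∏ j ∈ range (r+1), (m + j) := by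
  induction r with
  | zero => intro m; simp
  | succ r ih =>
      intro m
      rw [prod_range_succ' (fun j => m + j) (r+1)]
      have h1 : ∏ j ∈ range (r+1), (m + (j+1)) = ∏ j ∈ range (r+1), ((m+1) + j) := by
        apply prod_congr rfl; intro j _; omega
      rw [h1, ← ih (m+1)]
      have h2 : m + 1 + r = m + (r+1) := by omega
      rw [h2]
      have key : (m + (r+1)).choose (r+2) * (r+2) = (m + (r+1)).choose (r+1) * m := by
        have := Nat.choose_succ_right_eq (m + (r+1)) (r+1)
        simpa using this
      calc (m + (r + 1)).choose (r + 1 + 1) * Nat.factorial (r + 1 + 1)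
          = ((m + (r+1)).choose (r+2) * (r+2)) * Nat.factorial (r+1) := by
            rw [Nat.factorial_succ]; ring
        _ = ((m + (r+1)).choose (r+1) * m) * Nat.factorial (r+1) := by rw [key]
        _ = (m + (r + 1)).choose (r + 1) * Nat.factorial (r + 1) * (m + 0) := by ring


-- pair inequalities
lemma pairB (A B b s : ℕ) (hb : 1 ≤ b) (h : 2*B + b*s ≤ 2*A + s) :
    B * (B + b*s) ≤ A * (A + s) := by
  zify at *
  have key := mul_le_mul h h (by positivity) (by positivity)
  have hbs : (s:ℤ) ≤ b*s := by nlinarith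
  have h2 : (s:ℤ)*s ≤ (b*s)*(b*s) := by nlinarith
  nlinarith [key, h2]

lemma prodQb (b : ℕ) (hb : 1 ≤ b) : ∀ r, ∀ A B : ℕ, 2*B + b*(r-1) ≤ 2*A + (r-1) →
    ∏ j ∈ range r, (B + b*j) ≤ ∏ j ∈ range r, (A + j) := by
  intro r
  induction r using Nat.strong_induction_on with
  | _ r ih =>
    match r with
    | 0 => intro A B h; simp
    | 1 => intro A B h; simp at h ⊢; omega
    | 2 => intro A B h
           have e1 : ∏ j ∈ range 2, (A + j) = A * (A + 1) := by
             simp [prod_range_succ]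
           have e2 : ∏ j ∈ range 2, (B + b*j) = B * (B + b*1) := by
             simp [prod_range_succ]
           rw [e1, e2]
           exact pairB A B b 1 hb (by simpa using h)
    | (r+3) =>
      intro A B h
      have hs : r + 3 - 1 = r + 2 := rfl
      rw [hs] at h
      have expA : ∏ j ∈ range (r+3), (A + j)
          = (∏ j ∈ range (r+1), ((A+1) + j)) * (A * (A + (r+2))) := by
        rw [prod_range_succ, prod_range_succ' (fun j => A + j) (r+1)]
        rw [prod_congr rfl (fun j _ => show A + (j+1) = (A+1)+j by omega)]
        ring
      have expB : ∏ j ∈ range (r+3), (B + b*j)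
          = (∏ j ∈ range (r+1), ((B+b) + b*j)) * (B * (B + b*(r+2))) := by
        rw [prod_range_succ, prod_range_succ' (fun j => B + b*j) (r+1)]
        rw [prod_congr rfl (fun j _ => show B + b*(j+1) = (B+b)+b*j by ring)]
        ring
      rw [expA, expB]
      have hinner : 2*(B+b) + b*((r+1)-1) ≤ 2*(A+1) + ((r+1)-1) := by
        simp only [Nat.add_sub_cancel]
        have e1 : 2*(B+b) + b*r = 2*B + b*(r+2) := by ring
        omega
      exact Nat.mul_le_mul (ih (r+1) (by omega) (A+1) (B+b) hinner)
        (pairB A B b (r+2) hb h)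


lemma pairA (A B b s : ℕ)
    (h2 : (2*A+s)^2 + (b*s)^2 ≤ (2*B+b*s)^2 + s^2) :
    A * (A + s) ≤ B * (B + b*s) := by
  zify at *
  nlinarith [h2]

lemma prodQa (b : ℕ) (hb : 1 ≤ b) : ∀ r, ∀ A B : ℕ,
    (2*A+(r-1))^2 + (b*(r-1))^2 ≤ (2*B+b*(r-1))^2 + (r-1)^2 →
    ∏ j ∈ range r, (A + j) ≤ ∏ j ∈ range r, (B + b*j) := by
  intro r
  induction r using Nat.strong_induction_on with
  | _ r ih =>
    match r with
    | 0 => intro A B h; simp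
    | 1 => intro A B h; simp at h ⊢; nlinarith [h]
    | 2 => intro A B h
           have e1 : ∏ j ∈ range 2, (A + j) = A * (A + 1) := by
             simp [prod_range_succ]
           have e2 : ∏ j ∈ range 2, (B + b*j) = B * (B + b*1) := by
             simp [prod_range_succ]
           rw [e1, e2]
           exact pairA A B b 1 (by simpa using h)
    | (r+3) =>
      intro A B h
      have hs : r + 3 - 1 = r + 2 := rfl
      rw [hs] at h
      have expA : ∏ j ∈ range (r+3), (A + j)
          = (∏ j ∈ range (r+1), ((A+1) + j)) * (A * (A + (r+2))) := by
        rw [prod_range_succ, prod_range_succ' (fun j => A + j) (r+1)]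
        rw [prod_congr rfl (fun j _ => show A + (j+1) = (A+1)+j by omega)]
        ring
      have expB : ∏ j ∈ range (r+3), (B + b*j)
          = (∏ j ∈ range (r+1), ((B+b) + b*j)) * (B * (B + b*(r+2))) := by
        rw [prod_range_succ, prod_range_succ' (fun j => B + b*j) (r+1)]
        rw [prod_congr rfl (fun j _ => show B + b*(j+1) = (B+b)+b*j by ring)]
        ring
      rw [expA, expB]
      have hinner : (2*(A+1)+((r+1)-1))^2 + (b*((r+1)-1))^2
          ≤ (2*(B+b)+b*((r+1)-1))^2 + ((r+1)-1)^2 := by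
        simp only [Nat.add_sub_cancel]
        have eU : 2*(A+1)+r = 2*A+(r+2) := by ring
        have eV : 2*(B+b)+b*r = 2*B+b*(r+2) := by ring
        rw [eU, eV]
        zify at h ⊢
        have q1 : (1:ℤ) ≤ (b:ℤ)*b := by nlinarith
        have q2 : ((r:ℤ))^2 ≤ ((r:ℤ)+2)^2 := by nlinarith
        nlinarith [h, q1, q2]
      exact Nat.mul_le_mul (ih (r+1) (by omega) (A+1) (B+b) hinner)
        (pairA A B b (r+2) h)

lemma valB_succ (ℓ : ℕ) (x : Fin (ℓ+1) → ℕ) :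
    valB (ℓ+1) x = ((∑ j, x j) + ℓ).choose (ℓ+1) + valB ℓ (x ∘ Fin.succ) := by
  unfold valB
  rw [Fin.sum_univ_succ]
  congr 1
  · have h0 : (Finset.univ.filter (fun j : Fin (ℓ+1) => (0 : Fin (ℓ+1)) ≤ j)) = Finset.univ := by
      apply Finset.filter_true_of_mem; intro j _; exact Fin.zero_le j
    simp [h0]
  · apply Finset.sum_congr rfl
    intro i _
    have hsum : (∑ j ∈ Finset.univ.filter (fun j : Fin (ℓ+1) => i.succ ≤ j), x j)
        = ∑ j ∈ Finset.univ.filter (fun j : Fin ℓ => i ≤ j), (x ∘ Fin.succ) j := by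
      rw [Finset.sum_filter, Finset.sum_filter, Fin.sum_univ_succ]
      simp [Fin.succ_le_succ_iff, Fin.le_zero_iff]
    rw [hsum]
    have h1 : (ℓ + 1) - 1 - ((i.succ : Fin (ℓ+1)) : ℕ) = ℓ - 1 - (i : ℕ) := by
      simp only [Fin.val_succ]; omega
    have h2 : (ℓ + 1) - ((i.succ : Fin (ℓ+1)) : ℕ) = ℓ - (i : ℕ) := by
      simp only [Fin.val_succ]; omega
    rw [h1, h2]

lemma valB_bounds (ℓ : ℕ) : ∀ x : Fin (ℓ+1) → ℕ,
    ((∑ j, x j) + ℓ).choose (ℓ+1) ≤ valB (ℓ+1) x ∧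
      valB (ℓ+1) x < ((∑ j, x j) + ℓ + 1).choose (ℓ+1) := by
  induction ℓ with
  | zero =>
      intro x
      rw [valB_succ]
      have : valB 0 (x ∘ Fin.succ) = 0 := by simp [valB]
      simp [this]
  | succ ℓ ih =>
      intro x
      rw [valB_succ]
      obtain ⟨h1, h2⟩ := ih (x ∘ Fin.succ)
      have hST : ∑ j, x j = x 0 + ∑ j, (x ∘ Fin.succ) j := by
        rw [Fin.sum_univ_succ]; rfl
      have m1 : ((∑ j, (x ∘ Fin.succ) j) + ℓ + 1).choose (ℓ+1)
          ≤ ((∑ j, x j) + (ℓ+1)).choose (ℓ+1) :=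
        Nat.choose_le_choose _ (by omega)
      have m2 : ((∑ j, x j) + (ℓ+1) + 1).choose (ℓ+1+1)
          = ((∑ j, x j) + (ℓ+1)).choose (ℓ+1) + ((∑ j, x j) + (ℓ+1)).choose (ℓ+1+1) :=
        Nat.choose_succ_succ _ _
      omega

lemma valB_surj (ℓ : ℕ) : ∀ n : ℕ, ∃ x : Fin (ℓ+1) → ℕ, valB (ℓ+1) x = n := by
  induction ℓ with
  | zero =>
      intro n
      refine ⟨fun _ => n, ?_⟩
      rw [valB_succ]
      have h0 : valB 0 ((fun _ => n) ∘ Fin.succ) = 0 := by simp [valB]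
      simp [h0]
  | succ ℓ ih =>
      intro n
      classical
      set P : ℕ → Prop := fun m => Nat.choose m (ℓ+2) ≤ n with hP
      set m := Nat.findGreatest P (n + ℓ + 2) with hm
      have hPl : P (ℓ+1) := by
        simp only [hP]
        rw [Nat.choose_eq_zero_of_lt (by omega)]; omega
      have hml : ℓ + 1 ≤ m := Nat.le_findGreatest (by omega) hPl
      have hPm : P m := Nat.findGreatest_of_ne_zero hm.symm (by omega)
      have hnot : ¬ P (m+1) := by
        by_cases hb : m + 1 ≤ n + ℓ + 2
        · exact Nat.findGreatest_is_greatest (by omega) hb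
        · -- m + 1 > n + ℓ + 2, so choose (m+1) (ℓ+2) ≥ n+1
          intro hc
          have h1 : (n + 1) ≤ ((n+1) + (ℓ+1)).choose (ℓ+2) := succ_le_choose (n+1) (ℓ+1)
          have h2 : ((n+1) + (ℓ+1)).choose (ℓ+2) ≤ (m+1).choose (ℓ+2) :=
            Nat.choose_le_choose _ (by omega)
          simp only [hP] at hc
          omega
      simp only [hP] at hPm hnot
      push_neg at hnot
      have hpascal : (m+1).choose (ℓ+2) = m.choose (ℓ+1) + m.choose (ℓ+2) :=
        Nat.choose_succ_succ _ _
      -- remainder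
      obtain ⟨y, hy⟩ := ih (n - m.choose (ℓ+2))
      obtain ⟨hy1, hy2⟩ := valB_bounds ℓ y
      -- top of remainder is < m
      have htop : (∑ j, y j) + ℓ + 1 ≤ m := by
        by_contra hcon
        push_neg at hcon
        have : m.choose (ℓ+1) ≤ ((∑ j, y j) + ℓ).choose (ℓ+1) :=
          Nat.choose_le_choose _ (by omega)
        omega
      refine ⟨Fin.cons (m - (ℓ+1) - (∑ j, y j)) y, ?_⟩
      rw [valB_succ]
      have hcons : (Fin.cons (m - (ℓ+1) - (∑ j, y j)) y : Fin (ℓ+2) → ℕ) ∘ Fin.succ = y := by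
        funext j; simp
      have hsum : (∑ j, (Fin.cons (m - (ℓ+1) - (∑ j, y j)) y : Fin (ℓ+2) → ℕ) j)
          = (m - (ℓ+1) - (∑ j, y j)) + ∑ j, y j := by
        rw [Fin.sum_univ_succ]
        simp
      rw [hcons, hy, hsum]
      have he : m - (ℓ+1) - (∑ j, y j) + (∑ j, y j) + (ℓ+1) = m := by omega
      rw [he]
      show m.choose (ℓ+2) + (n - m.choose (ℓ+2)) = n
      omega

lemma KaSq (β S e T₀ L : ℕ) (hβ : 1 ≤ β) (hT : T₀ + β = β*S + e)
    (hD : (β-1)*(L+1+1) + (L+2) = β*(L+2))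
    (he2 : 2*e ≤ (β-1)*(L+1+1)+1)
    (hS0 : β*β*((L+1)*(L+1)) ≤ S) :
    (2*T₀+L)^2 + (β*L)^2 ≤ (2*(β*S)+β*L)^2 + L^2 := by
  zify at *
  set b := (β:ℤ); set s := (S:ℤ); set t := (T₀:ℤ); set l := (L:ℤ); set E := (e:ℤ)
  have hb1 : (1:ℤ) ≤ b := by exact_mod_cast hβ
  have hl0 : (0:ℤ) ≤ l := by positivity
  have hE0 : (0:ℤ) ≤ E := by positivity
  have ht0 : (0:ℤ) ≤ t := by positivity
  have hUV : (2*t+l) + 1 ≤ 2*(b*s)+b*l := by linarith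
  have k1 : ((2*t+l)+1)*((2*t+l)+1) ≤ (2*(b*s)+b*l)*(2*(b*s)+b*l) :=
    mul_le_mul hUV hUV (by linarith) (by positivity)
  have c2 : b*b*((l+1)*(l+1)) ≤ b*s := by
    have c1 : b*(b*b*((l+1)*(l+1))) ≤ b*s :=
      mul_le_mul_of_nonneg_left hS0 (by linarith)
    nlinarith [mul_le_mul_of_nonneg_right hb1 (by positivity : (0:ℤ) ≤ b*b*((l+1)*(l+1)))]
  have n1 : (0:ℤ) ≤ b*b*(l*l) := by positivity
  have n2 : (0:ℤ) ≤ b*b*l := by positivity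
  have n3 : b ≤ b*b := le_mul_of_one_le_left (by linarith) hb1
  have step3 : (b*l)^2 ≤ 2*(2*t+l) + 1 + l^2 := by nlinarith [c2, n1, n2, n3, hE0]
  nlinarith [k1, step3]

end AuxRepB

open Finset
set_option maxHeartbeats 1000000

/-- For sufficiently large `n`, `|rep_ℓ(β^ℓ n)| = β|rep_ℓ(n)| + ⌈(β−1)(ℓ+1)/2⌉ − i` for
some `i ∈ {0, …, β}` (stated additively to avoid truncated subtraction; the ceiling
`⌈(β−1)(ℓ+1)/2⌉` is written as `((β−1)(ℓ+1) + 1) / 2` in natural division). -/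
theorem repB_length_of_mul_pow (ℓ β : ℕ) (hℓ : 1 ≤ ℓ) (hβ : 1 ≤ β) :
    ∃ N : ℕ, ∀ n ≥ N, ∃ i ≤ β,
      (∑ j : Fin ℓ, repB ℓ (β ^ ℓ * n) j) + i =
        β * (∑ j : Fin ℓ, repB ℓ n j) + ((β - 1) * (ℓ + 1) + 1) / 2 := by
  obtain ⟨L, rfl⟩ : ∃ L, ℓ = L + 1 := ⟨ℓ - 1, by omega⟩
  set e := ((β - 1) * (L + 1 + 1) + 1) / 2 with he
  have hD : (β - 1) * (L + 1 + 1) + (L + 2) = β * (L + 2) := by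
    cases β with
    | zero => omega
    | succ γ => simp only [Nat.succ_sub_one]; ring
  have he1 : (β - 1) * (L + 1 + 1) ≤ 2 * e ∧ 2 * e ≤ (β - 1) * (L + 1 + 1) + 1 := by
    rw [he]; omega
  refine ⟨(β * β * ((L + 1) * (L + 1)) + (L + 1)).choose (L + 1), ?_⟩
  intro n hn
  have hval : ∀ k : ℕ, valB (L+1) (repB (L+1) k) = k :=
    fun k => Function.invFun_eq (valB_surj L k)
  have hb1 := valB_bounds L (repB (L+1) n)
  rw [hval n] at hb1
  have hb2 := valB_bounds L (repB (L+1) (β ^ (L+1) * n))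
  rw [hval (β ^ (L+1) * n)] at hb2
  obtain ⟨hn1, hn2⟩ := hb1
  obtain ⟨hm1, hm2⟩ := hb2
  generalize hSg : (∑ j, repB (L+1) n j) = S at hn1 hn2 ⊢
  generalize hS'g : (∑ j, repB (L+1) (β ^ (L+1) * n) j) = S' at hm1 hm2 ⊢
  -- S is large
  have hS0 : β * β * ((L + 1) * (L + 1)) ≤ S := by
    by_contra hcon
    push_neg at hcon
    have hc2 : (S + L + 1).choose (L + 1) ≤ (β * β * ((L + 1) * (L + 1)) + (L + 1)).choose (L + 1) :=
      Nat.choose_le_choose _ (by omega)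
    exact absurd (lt_of_lt_of_le hn2 hc2) (not_lt.mpr hn)
  have hS1 : 1 ≤ S := by
    have h1 : 1*1 ≤ β*β := Nat.mul_le_mul hβ hβ
    have h2 : 1*1 ≤ (L+1)*(L+1) := Nat.mul_le_mul (by omega) (by omega)
    have h3 := (Nat.mul_le_mul h1 h2).trans hS0
    simpa using h3
  have hβS : β ≤ β * S := Nat.le_mul_of_pos_right β hS1
  set T₀ := β * S + e - β with hT₀
  have hT : T₀ + β = β * S + e := by omega
  have hfacpos : 0 < Nat.factorial (L + 1) := Nat.factorial_pos _
  -- Key inequality (b')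
  have Kb : β ^ (L+1) * (S + L + 1).choose (L + 1) ≤ (β * S + e + L + 1).choose (L + 1) := by
    have pF1 := prodF L (S + 1)
    have pF2 := prodF L (β * S + e + 1)
    have hc : ∏ _j ∈ range (L+1), β = β ^ (L+1) := by simp
    have hprod : β ^ (L+1) * ∏ j ∈ range (L+1), ((S+1) + j)
        = ∏ j ∈ range (L+1), ((β * S + β) + β * j) := by
      calc β ^ (L+1) * ∏ j ∈ range (L+1), ((S+1) + j)
          = (∏ _j ∈ range (L+1), β) * ∏ j ∈ range (L+1), ((S+1) + j) := by rw [hc]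
        _ = ∏ j ∈ range (L+1), (β * ((S+1) + j)) := Finset.prod_mul_distrib.symm
        _ = ∏ j ∈ range (L+1), ((β * S + β) + β * j) :=
            Finset.prod_congr rfl (fun j _ => by ring)
    have hQ : ∏ j ∈ range (L+1), ((β * S + β) + β * j)
        ≤ ∏ j ∈ range (L+1), ((β * S + e + 1) + j) := by
      apply prodQb β hβ
      have hLs : (L + 1) - 1 = L := rfl
      rw [hLs]
      nlinarith [he1.1, he1.2, hD]
    have chain : (β ^ (L+1) * (S + L + 1).choose (L + 1)) * Nat.factorial (L+1)
        ≤ (β * S + e + L + 1).choose (L + 1) * Nat.factorial (L+1) := by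
      have e1 : S + 1 + L = S + L + 1 := by omega
      have e2 : β * S + e + 1 + L = β * S + e + L + 1 := by omega
      rw [e1] at pF1; rw [e2] at pF2
      calc (β ^ (L+1) * (S + L + 1).choose (L + 1)) * Nat.factorial (L+1)
          = β ^ (L+1) * ((S + L + 1).choose (L + 1) * Nat.factorial (L+1)) := by ring
        _ = β ^ (L+1) * ∏ j ∈ range (L+1), ((S+1) + j) := by rw [pF1]
        _ = ∏ j ∈ range (L+1), ((β * S + β) + β * j) := hprod
        _ ≤ ∏ j ∈ range (L+1), ((β * S + e + 1) + j) := hQ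
        _ = (β * S + e + L + 1).choose (L + 1) * Nat.factorial (L+1) := pF2.symm
    exact Nat.le_of_mul_le_mul_right chain hfacpos
  -- Key inequality (a')
  have Ka : (T₀ + L).choose (L + 1) ≤ β ^ (L+1) * (S + L).choose (L + 1) := by
    have pF1 := prodF L T₀
    have pF2 := prodF L S
    have hc : ∏ _j ∈ range (L+1), β = β ^ (L+1) := by simp
    have hprod : β ^ (L+1) * ∏ j ∈ range (L+1), (S + j)
        = ∏ j ∈ range (L+1), (β * S + β * j) := by
      calc β ^ (L+1) * ∏ j ∈ range (L+1), (S + j)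
          = (∏ _j ∈ range (L+1), β) * ∏ j ∈ range (L+1), (S + j) := by rw [hc]
        _ = ∏ j ∈ range (L+1), (β * (S + j)) := Finset.prod_mul_distrib.symm
        _ = ∏ j ∈ range (L+1), (β * S + β * j) :=
            Finset.prod_congr rfl (fun j _ => by ring)
    have hQ : ∏ j ∈ range (L+1), (T₀ + j) ≤ ∏ j ∈ range (L+1), (β * S + β * j) := by
      apply prodQa β hβ
      have hLs : (L + 1) - 1 = L := rfl
      rw [hLs]
      exact KaSq β S e T₀ L hβ hT hD he1.2 hS0
    have chain : (T₀ + L).choose (L + 1) * Nat.factorial (L+1)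
        ≤ (β ^ (L+1) * (S + L).choose (L + 1)) * Nat.factorial (L+1) := by
      calc (T₀ + L).choose (L + 1) * Nat.factorial (L+1)
          = ∏ j ∈ range (L+1), (T₀ + j) := pF1
        _ ≤ ∏ j ∈ range (L+1), (β * S + β * j) := hQ
        _ = β ^ (L+1) * ∏ j ∈ range (L+1), (S + j) := hprod.symm
        _ = β ^ (L+1) * ((S + L).choose (L + 1) * Nat.factorial (L+1)) := by rw [pF2]
        _ = (β ^ (L+1) * (S + L).choose (L + 1)) * Nat.factorial (L+1) := by ring
    exact Nat.le_of_mul_le_mul_right chain hfacpos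
  -- upper bound : S' ≤ β * S + e
  have hub : S' ≤ β * S + e := by
    by_contra hcon
    push_neg at hcon
    have c1 : (β * S + e + L + 1).choose (L + 1) ≤ (S' + L).choose (L + 1) :=
      Nat.choose_le_choose _ (by omega)
    have c3 : β ^ (L+1) * n < β ^ (L+1) * (S + L + 1).choose (L + 1) :=
      (Nat.mul_lt_mul_left (Nat.pow_pos (by omega))).mpr hn2
    have := c3.trans_le (Kb.trans (c1.trans hm1))
    exact lt_irrefl _ this
  -- lower bound : β * S + e ≤ S' + β
  have hlb : β * S + e ≤ S' + β := by
    by_contra hcon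
    push_neg at hcon
    have c2 : (S' + L + 1).choose (L + 1) ≤ (T₀ + L).choose (L + 1) :=
      Nat.choose_le_choose _ (by omega)
    have c4 : β ^ (L+1) * (S + L).choose (L + 1) ≤ β ^ (L+1) * n :=
      Nat.mul_le_mul_left _ hn1
    have := hm2.trans_le ((c2.trans Ka).trans c4)
    exact lt_irrefl _ this
  refine ⟨β * S + e - S', by omega, by omega⟩
end

section
/- Let ℓ ≥ 1 and β ≥ 1 be integers and let c_{ℓ−1}, c_{ℓ−2}, …, c_0 ∈ ℚ be defined by the stated recursion. Then for every q ∈ ℕ (indeed for every rational q): β^ℓ · Σ_{i=1}^{ℓ} binom(q+i−1, i) = Σ_{i=1}^{ℓ} binom(β·q + c_{i−1} + i − 1, i), where both sides are evaluated in ℚ. -/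
/-- Unsigned Stirling numbers of the first kind: `x(x+1)⋯(x+i−1) = Σ_j S₁(i,j) x^j`,
with `S₁(i,j) = 0` for `j = 0` (or `i < j`). -/
noncomputable def S1 (i j : ℕ) : ℕ := if j = 0 then 0 else (ascPochhammer ℕ i).coeff j

/-- Generalized binomial coefficient `binom(x, m) = x(x−1)⋯(x−m+1)/m!` over `ℚ`. -/
def qbinom (x : ℚ) (m : ℕ) : ℚ := (∏ j ∈ Finset.range m, (x - (j : ℚ))) / (Nat.factorial m : ℚ)

open Finset Polynomial

lemma S1_cast (n : ℕ) (hn : 1 ≤ n) (j : ℕ) :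
    (S1 n j : ℚ) = (ascPochhammer ℚ n).coeff j := by
  rw [← ascPochhammer_map (algebraMap ℕ ℚ) n, coeff_map]
  rcases Nat.eq_zero_or_pos j with hj | hj
  · subst hj
    simp [S1, coeff_zero_eq_eval_zero, ascPochhammer_eval_zero,
      Nat.one_le_iff_ne_zero.mp hn]
  · simp [S1, Nat.one_le_iff_ne_zero.mp hj]

lemma S1_zero_left (j : ℕ) : S1 0 j = 0 := by
  rcases Nat.eq_zero_or_pos j with hj | hj
  · simp [S1, hj]
  · simp [S1, Nat.one_le_iff_ne_zero.mp hj, ascPochhammer_zero, coeff_one,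
      Nat.one_le_iff_ne_zero.mp hj]

lemma S1_eq_zero_of_lt {i j : ℕ} (h : i < j) : S1 i j = 0 := by
  have : (ascPochhammer ℕ i).coeff j = 0 := by
    apply coeff_eq_zero_of_natDegree_lt
    rwa [ascPochhammer_natDegree]
  simp [S1, this]

lemma S1_diag (n : ℕ) : S1 (n+1) (n+1) = 1 := by
  have h := (monic_ascPochhammer ℕ (n+1)).coeff_natDegree
  rw [ascPochhammer_natDegree] at h
  simp [S1, h]

/-- Auxiliary normalized Stirling coefficient. -/
noncomputable def aQ (i j : ℕ) : ℚ := (S1 i j : ℚ) / (Nat.factorial i : ℚ)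

lemma aQ_zero_left (j : ℕ) : aQ 0 j = 0 := by simp [aQ, S1_zero_left]

lemma aQ_eq_zero_of_lt {i j : ℕ} (h : i < j) : aQ i j = 0 := by
  simp [aQ, S1_eq_zero_of_lt h]

lemma asc_eval (n : ℕ) (x : ℚ) :
    (ascPochhammer ℚ n).eval x = ∏ t ∈ Finset.range n, (x + t) := by
  induction n with
  | zero => simp
  | succ n ih => rw [ascPochhammer_succ_right, prod_range_succ, ← ih]; simp

lemma qbinom_expand (x : ℚ) (i N : ℕ) (h : i + 1 ≤ N) :
    qbinom (x + i) (i+1) = ∑ j ∈ Finset.range (N+1), aQ (i+1) j * x ^ j := by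
  have hprod : ∏ j ∈ Finset.range (i+1), (x + i - j) = (ascPochhammer ℚ (i+1)).eval x := by
    rw [asc_eval, ← Finset.prod_range_reflect (fun t => x + (t : ℚ)) (i+1)]
    apply Finset.prod_congr rfl
    intro j hj
    rw [mem_range] at hj
    have h2 : i + 1 - 1 - j = i - j := by omega
    rw [h2, Nat.cast_sub (by omega)]
    ring
  have heval : (ascPochhammer ℚ (i+1)).eval x =
      ∑ j ∈ Finset.range (N+1), (ascPochhammer ℚ (i+1)).coeff j * x ^ j := by
    apply eval_eq_sum_range'
    rw [ascPochhammer_natDegree]; omega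
  rw [qbinom, hprod, heval, Finset.sum_div]
  apply Finset.sum_congr rfl
  intro j _
  rw [aQ, S1_cast (i+1) (by omega) j]
  ring

/-- The key coefficient identity derived from the recursion. -/
lemma Wval (ℓ β : ℕ) (c : ℕ → ℚ)
    (hc : ∀ k < ℓ, c k =
      (Nat.factorial k : ℚ) * ((β : ℚ) ^ (ℓ - k) - 1) *
          (∑ i ∈ Finset.Icc k ℓ, (S1 i k : ℚ) / (Nat.factorial i : ℚ)) -
        ∑ i ∈ Finset.Icc (k + 2) ℓ, ∑ j ∈ Finset.Icc (k + 1) i,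
          ((S1 i j : ℚ) * (Nat.factorial j : ℚ)) /
              ((Nat.factorial i : ℚ) * (Nat.factorial (j - k) : ℚ)) *
            (c (i - 1)) ^ (j - k))
    (m : ℕ) (hm : m ≤ ℓ) :
    (∑ i ∈ Finset.range (ℓ+1), ∑ j ∈ Finset.range (ℓ+1),
        if m < j then aQ i j * (j.choose m : ℚ) * c (i-1) ^ (j-m) else 0)
      = ((β : ℚ) ^ (ℓ - m) - 1) * ∑ i ∈ Finset.range (ℓ+1), aQ i m := by
  rcases eq_or_lt_of_le hm with hme | hml
  · -- m = ℓ : both sides vanish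
    have h0 : (∑ i ∈ Finset.range (ℓ+1), ∑ j ∈ Finset.range (ℓ+1),
        if m < j then aQ i j * (j.choose m : ℚ) * c (i-1) ^ (j-m) else 0) = 0 := by
      apply Finset.sum_eq_zero; intro i _
      apply Finset.sum_eq_zero; intro j hj
      rw [mem_range] at hj
      rw [if_neg (by omega)]
    rw [h0, ← hme, Nat.sub_self, pow_zero, sub_self, zero_mul]
  · -- m < ℓ
    have hfacm : (Nat.factorial m : ℚ) ≠ 0 := Nat.cast_ne_zero.mpr (Nat.factorial_ne_zero m)
    -- restrict the outer sum to i ∈ Icc (m+1) ℓ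
    have hW1 : (∑ i ∈ Finset.range (ℓ+1), ∑ j ∈ Finset.range (ℓ+1),
        if m < j then aQ i j * (j.choose m : ℚ) * c (i-1) ^ (j-m) else 0)
        = ∑ i ∈ Finset.Icc (m+1) ℓ, ∑ j ∈ Finset.range (ℓ+1),
            if m < j then aQ i j * (j.choose m : ℚ) * c (i-1) ^ (j-m) else 0 := by
      symm
      apply Finset.sum_subset
      · intro i hi; rw [mem_Icc] at hi; rw [mem_range]; omega
      · intro i hiR hiI
        rw [mem_range] at hiR; rw [mem_Icc] at hiI
        apply Finset.sum_eq_zero; intro j hj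
        rw [mem_range] at hj
        by_cases h : m < j
        · rw [if_pos h, aQ_eq_zero_of_lt (show i < j by omega)]; ring
        · rw [if_neg h]
    -- split off the i = m+1 term
    have hsplit : Finset.Icc (m+1) ℓ = insert (m+1) (Finset.Icc (m+2) ℓ) := by
      ext x; simp only [mem_Icc, mem_insert]; omega
    have hnm : (m+1) ∉ Finset.Icc (m+2) ℓ := by simp only [mem_Icc]; omega
    -- the i = m+1 term equals c m / m!
    have hgm1 : (∑ j ∈ Finset.range (ℓ+1),
        if m < j then aQ (m+1) j * (j.choose m : ℚ) * c ((m+1)-1) ^ (j-m) else 0)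
        = c m / (Nat.factorial m : ℚ) := by
      have hcongr : ∀ j ∈ Finset.range (ℓ+1),
          (if m < j then aQ (m+1) j * (j.choose m : ℚ) * c ((m+1)-1) ^ (j-m) else 0)
          = if j = m+1 then c m / (Nat.factorial m : ℚ) else 0 := by
        intro j hj
        rw [mem_range] at hj
        by_cases hje : j = m+1
        · subst hje
          rw [if_pos (by omega), if_pos rfl]
          have h1 : aQ (m+1) (m+1) = 1 / (Nat.factorial (m+1) : ℚ) := by
            simp [aQ, S1_diag]
          have h2 : (m+1) - 1 = m := by omega
          have h3 : m + 1 - m = 1 := by omega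
          rw [h1, Nat.choose_succ_self_right, h2, h3, pow_one, Nat.factorial_succ]
          have : ((m:ℚ) + 1) ≠ 0 := by positivity
          push_cast
          field_simp
        · by_cases hmj : m < j
          · rw [if_pos hmj, if_neg hje,
              aQ_eq_zero_of_lt (show m+1 < j by omega)]; ring
          · rw [if_neg hmj, if_neg hje]
      rw [Finset.sum_congr rfl hcongr, Finset.sum_ite_eq' (Finset.range (ℓ+1)) (m+1)]
      rw [if_pos (by rw [mem_range]; omega)]
    -- the i ≥ m+2 terms
    have hgi : ∀ i ∈ Finset.Icc (m+2) ℓ,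
        (∑ j ∈ Finset.range (ℓ+1),
          if m < j then aQ i j * (j.choose m : ℚ) * c (i-1) ^ (j-m) else 0)
        = (∑ j ∈ Finset.Icc (m+1) i,
            ((S1 i j : ℚ) * (Nat.factorial j : ℚ)) /
              ((Nat.factorial i : ℚ) * (Nat.factorial (j - m) : ℚ)) *
            (c (i - 1)) ^ (j - m)) / (Nat.factorial m : ℚ) := by
      intro i hi
      rw [mem_Icc] at hi
      rw [Finset.sum_div]
      symm
      rw [← Finset.sum_subset (show Finset.Icc (m+1) i ⊆ Finset.range (ℓ+1) by
          intro j hj; rw [mem_Icc] at hj; rw [mem_range]; omega)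
        (by
          intro j hjR hjI
          rw [mem_range] at hjR; rw [mem_Icc] at hjI
          by_cases h : m < j
          · rw [if_pos h, aQ_eq_zero_of_lt (show i < j by omega)]; ring
          · rw [if_neg h])]
      apply Finset.sum_congr rfl
      intro j hj
      rw [mem_Icc] at hj
      rw [if_pos (by omega)]
      rw [aQ, Nat.cast_choose ℚ (show m ≤ j by omega)]
      have hfi : (Nat.factorial i : ℚ) ≠ 0 := Nat.cast_ne_zero.mpr (Nat.factorial_ne_zero i)
      have hfjm : (Nat.factorial (j-m) : ℚ) ≠ 0 :=
        Nat.cast_ne_zero.mpr (Nat.factorial_ne_zero (j-m))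
      field_simp
    -- combine with the recursion
    have hc' := hc m hml
    have hA : (∑ i ∈ Finset.Icc m ℓ, (S1 i m : ℚ) / (Nat.factorial i : ℚ))
        = ∑ i ∈ Finset.range (ℓ+1), aQ i m := by
      rw [show (fun i => aQ i m) = (fun i => (S1 i m : ℚ) / (Nat.factorial i : ℚ)) from rfl]
      apply Finset.sum_subset
      · intro i hi; rw [mem_Icc] at hi; rw [mem_range]; omega
      · intro i hiR hiI
        rw [mem_range] at hiR; rw [mem_Icc] at hiI
        have h := aQ_eq_zero_of_lt (show i < m by omega) (j := m) (i := i)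
        simpa [aQ] using h
    rw [hW1, hsplit, Finset.sum_insert hnm, hgm1, Finset.sum_congr rfl hgi,
      ← Finset.sum_div, ← hA]
    rw [hc']
    field_simp
    ring

/-- With `c_{ℓ−1}, …, c_0` defined by the recursion
`c_k = k!(β^{ℓ−k}−1) Σ_{i=k}^{ℓ} S₁(i,k)/i! − Σ_{i=k+2}^{ℓ} Σ_{j=k+1}^{i} S₁(i,j)j!/(i!(j−k)!) c_{i−1}^{j−k}`,
one has `β^ℓ Σ_{i=1}^{ℓ} binom(q+i−1, i) = Σ_{i=1}^{ℓ} binom(βq + c_{i−1} + i − 1, i)`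
for every rational `q`. -/
theorem pow_mul_val_eq_sum_binom (ℓ β : ℕ) (hℓ : 1 ≤ ℓ) (hβ : 1 ≤ β) (c : ℕ → ℚ)
    (hc : ∀ k < ℓ, c k =
      (Nat.factorial k : ℚ) * ((β : ℚ) ^ (ℓ - k) - 1) *
          (∑ i ∈ Finset.Icc k ℓ, (S1 i k : ℚ) / (Nat.factorial i : ℚ)) -
        ∑ i ∈ Finset.Icc (k + 2) ℓ, ∑ j ∈ Finset.Icc (k + 1) i,
          ((S1 i j : ℚ) * (Nat.factorial j : ℚ)) /
              ((Nat.factorial i : ℚ) * (Nat.factorial (j - k) : ℚ)) *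
            (c (i - 1)) ^ (j - k)) :
    ∀ q : ℚ,
      (β : ℚ) ^ ℓ * ∑ i ∈ Finset.range ℓ, qbinom (q + (i : ℚ)) (i + 1) =
        ∑ i ∈ Finset.range ℓ, qbinom ((β : ℚ) * q + c i + (i : ℚ)) (i + 1) := by
  intro q
  -- Step 1: rewrite LHS sum as a rectangle sum
  have hL : ∑ i ∈ Finset.range ℓ, qbinom (q + (i:ℚ)) (i+1)
      = ∑ i ∈ Finset.range (ℓ+1), ∑ j ∈ Finset.range (ℓ+1), aQ i j * q ^ j := by
    rw [Finset.sum_range_succ']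
    have h0 : (∑ j ∈ Finset.range (ℓ+1), aQ 0 j * q ^ j) = 0 := by
      apply Finset.sum_eq_zero; intro j _; rw [aQ_zero_left]; ring
    rw [h0, add_zero]
    apply Finset.sum_congr rfl
    intro i hi
    rw [mem_range] at hi
    exact qbinom_expand q i ℓ (by omega)
  -- Step 2: rewrite RHS sum as a rectangle sum
  have hR : ∑ i ∈ Finset.range ℓ, qbinom ((β:ℚ)*q + c i + (i:ℚ)) (i+1)
      = ∑ i ∈ Finset.range (ℓ+1), ∑ j ∈ Finset.range (ℓ+1),
          aQ i j * ((β:ℚ)*q + c (i-1)) ^ j := by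
    rw [Finset.sum_range_succ']
    have h0 : (∑ j ∈ Finset.range (ℓ+1), aQ 0 j * ((β:ℚ)*q + c (0-1)) ^ j) = 0 := by
      apply Finset.sum_eq_zero; intro j _; rw [aQ_zero_left]; ring
    rw [h0, add_zero]
    apply Finset.sum_congr rfl
    intro i hi
    rw [mem_range] at hi
    have h := qbinom_expand ((β:ℚ)*q + c i) i ℓ (by omega)
    simpa only [Nat.add_sub_cancel] using h
  -- Step 3: binomial expansion of each summand on the RHS
  have hstep : ∀ i ∈ Finset.range (ℓ+1), ∀ j ∈ Finset.range (ℓ+1),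
      aQ i j * ((β:ℚ)*q + c (i-1)) ^ j
        = aQ i j * (β:ℚ)^j * q^j
          + ∑ m ∈ Finset.range (ℓ+1), (if m < j then
              aQ i j * (j.choose m : ℚ) * c (i-1) ^ (j - m) * (β:ℚ)^m * q^m else 0) := by
    intro i hi j hj
    rw [mem_range] at hi hj
    have hpow : ((β:ℚ)*q + c (i-1)) ^ j
        = ∑ m ∈ Finset.range (ℓ+1),
            ((β:ℚ)*q)^m * c (i-1) ^ (j-m) * (j.choose m : ℚ) := by
      rw [add_pow]
      apply Finset.sum_subset
      · intro m hm; rw [mem_range] at *; omega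
      · intro m hmR hmI
        rw [mem_range] at hmR hmI
        rw [Nat.choose_eq_zero_of_lt (by omega)]
        push_cast; ring
    rw [hpow, Finset.mul_sum]
    have hterm : ∀ m ∈ Finset.range (ℓ+1),
        aQ i j * (((β:ℚ)*q)^m * c (i-1)^(j-m) * (j.choose m:ℚ))
        = (if m = j then aQ i j * (β:ℚ)^j * q^j else 0)
          + (if m < j then aQ i j * (j.choose m:ℚ) * c (i-1)^(j-m) * (β:ℚ)^m * q^m
             else 0) := by
      intro m _
      rcases lt_trichotomy m j with h | h | h
      · rw [if_neg (by omega), if_pos h, zero_add, mul_pow]; ring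
      · subst h
        rw [if_pos rfl, if_neg (lt_irrefl _), add_zero, Nat.sub_self, pow_zero,
          Nat.choose_self, mul_pow]
        push_cast; ring
      · rw [if_neg (by omega), if_neg (by omega), Nat.choose_eq_zero_of_lt h]
        push_cast; ring
    rw [Finset.sum_congr rfl hterm, Finset.sum_add_distrib,
      Finset.sum_ite_eq' (Finset.range (ℓ+1)) j, if_pos (Finset.mem_range.mpr hj)]
  -- Step 4: reorganize the triple sum using the key coefficient identity
  have e2 : (∑ i ∈ Finset.range (ℓ+1), ∑ j ∈ Finset.range (ℓ+1),
        ∑ m ∈ Finset.range (ℓ+1),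
          (if m < j then aQ i j * (j.choose m : ℚ) * c (i-1) ^ (j - m) *
              (β:ℚ)^m * q^m else 0))
      = ∑ m ∈ Finset.range (ℓ+1),
          ((β:ℚ)^m * q^m *
            (((β:ℚ)^(ℓ-m) - 1) * ∑ i ∈ Finset.range (ℓ+1), aQ i m)) := by
    rw [Finset.sum_congr rfl
      (fun i (_ : i ∈ Finset.range (ℓ+1)) => Finset.sum_comm), Finset.sum_comm]
    apply Finset.sum_congr rfl
    intro m hm
    rw [mem_range] at hm
    rw [← Wval ℓ β c hc m (by omega), Finset.mul_sum]
    apply Finset.sum_congr rfl; intro i _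
    rw [Finset.mul_sum]
    apply Finset.sum_congr rfl; intro j _
    split_ifs with h <;> ring
  have e4 : (∑ i ∈ Finset.range (ℓ+1), ∑ j ∈ Finset.range (ℓ+1),
        aQ i j * (β:ℚ)^j * q^j)
      = ∑ j ∈ Finset.range (ℓ+1),
          (∑ i ∈ Finset.range (ℓ+1), aQ i j) * ((β:ℚ)^j * q^j) := by
    rw [Finset.sum_comm]
    apply Finset.sum_congr rfl; intro j _
    rw [Finset.sum_mul]
    apply Finset.sum_congr rfl; intro i _; ring
  have e5 : (β:ℚ)^ℓ * (∑ i ∈ Finset.range (ℓ+1), ∑ j ∈ Finset.range (ℓ+1),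
        aQ i j * q ^ j)
      = ∑ j ∈ Finset.range (ℓ+1),
          (β:ℚ)^ℓ * ((∑ i ∈ Finset.range (ℓ+1), aQ i j) * q^j) := by
    rw [Finset.sum_comm, Finset.mul_sum]
    apply Finset.sum_congr rfl; intro j _
    congr 1
    rw [← Finset.sum_mul]
  rw [hL, hR, e5,
    Finset.sum_congr rfl (fun i hi => Finset.sum_congr rfl (fun j hj => hstep i hi j hj))]
  simp only [Finset.sum_add_distrib]
  rw [e2, e4, ← Finset.sum_add_distrib]
  apply Finset.sum_congr rfl
  intro m hm
  rw [mem_range] at hm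
  have hp : (β:ℚ)^ℓ = (β:ℚ)^m * (β:ℚ)^(ℓ-m) := by rw [← pow_add]; congr 1; omega
  rw [hp]; ring
end

section
/- Let β ≥ 1 be an integer and let c_{ℓ−1} and c_{ℓ−2} be defined by the stated recursion. Then for every ℓ ≥ 2, c_{ℓ−1} = (β−1)(ℓ+1)/2, and for every ℓ ≥ 3, c_{ℓ−2} = (β−1)(ℓ+1)/2 − (β²−1)(ℓ+1)/24. -/
lemma coeff_mul_X_add (p : Polynomial ℕ) (a k : ℕ) :
    (p * (Polynomial.X + (a:Polynomial ℕ))).coeff (k+1) = p.coeff k + a * p.coeff (k+1) := by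
  rw [mul_add, Polynomial.coeff_add, Polynomial.coeff_mul_X, ← Polynomial.C_eq_natCast,
    Polynomial.coeff_mul_C, mul_comm, Nat.cast_id]

lemma asc_coeff_self (n : ℕ) : (ascPochhammer ℕ n).coeff n = 1 := by
  have h := monic_ascPochhammer ℕ n
  simpa [ascPochhammer_natDegree] using h.coeff_natDegree

lemma asc_coeff_sub_one (n : ℕ) :
    2 * (ascPochhammer ℕ (n+1)).coeff n = n * (n + 1) := by
  induction n with
  | zero => simp [ascPochhammer_one]
  | succ m ih =>
    rw [ascPochhammer_succ_right, coeff_mul_X_add, asc_coeff_self, Nat.mul_add, ih]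
    ring

lemma asc_coeff_sub_two (n : ℕ) :
    24 * (ascPochhammer ℕ (n+2)).coeff n = n * (n+1) * (n+2) * (3*n+5) := by
  induction n with
  | zero => simp [show (2:ℕ) = 1 + 1 from rfl, ascPochhammer_succ_right, ascPochhammer_one]
  | succ m ih =>
    rw [show m+1+2 = (m+2)+1 from rfl, ascPochhammer_succ_right, coeff_mul_X_add, Nat.mul_add, ih]
    have h2 := asc_coeff_sub_one (m+1)
    have : 24 * ((m + 2) * (ascPochhammer ℕ (m + 2)).coeff (m + 1))
        = 12 * (m+2) * (2 * (ascPochhammer ℕ (m+1+1)).coeff (m+1)) := by ring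
    rw [this, h2]
    ring

lemma S1_Q1 (n : ℕ) : (S1 (n+1) (n+1) : ℚ) = 1 := by
  simp [S1, asc_coeff_self]

lemma S1_Q2 (n : ℕ) : (S1 (n+2) (n+1) : ℚ) = (n+1)*(n+2)/2 := by
  have h := asc_coeff_sub_one (n+1)
  have : (2 : ℚ) * (S1 (n+2) (n+1) : ℚ) = (n+1)*(n+2) := by
    simp only [S1, Nat.succ_ne_zero, if_false]
    exact_mod_cast congrArg (Nat.cast : ℕ → ℚ) h
  linarith

lemma S1_Q3 (n : ℕ) : (S1 (n+3) (n+1) : ℚ) = (n+1)*(n+2)*(n+3)*(3*n+8)/24 := by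
  have h := asc_coeff_sub_two (n+1)
  have : (24 : ℚ) * (S1 (n+3) (n+1) : ℚ) = (n+1)*(n+2)*(n+3)*(3*n+8) := by
    simp only [S1, Nat.succ_ne_zero, if_false]
    have := congrArg (Nat.cast : ℕ → ℚ) h
    push_cast at this ⊢
    convert this using 2 <;> ring_nf
  linarith

/-- Closed formulas for the two leading constants of the recursion:
`c_{ℓ−1} = (β−1)(ℓ+1)/2` for `ℓ ≥ 2`, and
`c_{ℓ−2} = (β−1)(ℓ+1)/2 − (β²−1)(ℓ+1)/24` for `ℓ ≥ 3`. -/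
theorem c_top_two_formulas (ℓ β : ℕ) (hℓ : 1 ≤ ℓ) (hβ : 1 ≤ β) (c : ℕ → ℚ)
    (hc : ∀ k < ℓ, c k =
      (Nat.factorial k : ℚ) * ((β : ℚ) ^ (ℓ - k) - 1) *
          (∑ i ∈ Finset.Icc k ℓ, (S1 i k : ℚ) / (Nat.factorial i : ℚ)) -
        ∑ i ∈ Finset.Icc (k + 2) ℓ, ∑ j ∈ Finset.Icc (k + 1) i,
          ((S1 i j : ℚ) * (Nat.factorial j : ℚ)) /
              ((Nat.factorial i : ℚ) * (Nat.factorial (j - k) : ℚ)) *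
            (c (i - 1)) ^ (j - k)) :
    (2 ≤ ℓ → c (ℓ - 1) = ((β : ℚ) - 1) * ((ℓ : ℚ) + 1) / 2) ∧
      (3 ≤ ℓ → c (ℓ - 2) =
        ((β : ℚ) - 1) * ((ℓ : ℚ) + 1) / 2 - ((β : ℚ) ^ 2 - 1) * ((ℓ : ℚ) + 1) / 24) := by
  have part1 : 2 ≤ ℓ → c (ℓ - 1) = ((β : ℚ) - 1) * ((ℓ : ℚ) + 1) / 2 := by
    intro h2
    obtain ⟨m, rfl⟩ : ∃ m, ℓ = m + 2 := ⟨ℓ - 2, by omega⟩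
    have h := hc (m + 1) (by omega)
    rw [show m + 2 - 1 = m + 1 from rfl] at *
    have e1 : Finset.Icc (m + 1 + 2) (m + 2) = ∅ := Finset.Icc_eq_empty (by omega)
    rw [e1, Finset.sum_empty, show m + 2 = (m + 1) + 1 from rfl,
      Finset.sum_Icc_succ_top (by omega), Finset.Icc_self, Finset.sum_singleton] at h
    rw [h, S1_Q1, S1_Q2]
    have hf1 : ((m+1).factorial : ℚ) ≠ 0 := Nat.cast_ne_zero.mpr (Nat.factorial_ne_zero _)
    have hf2 : ((m+1+1).factorial : ℚ) = ((m:ℚ)+2) * ((m+1).factorial : ℚ) := by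
      rw [Nat.factorial_succ]; push_cast; ring
    rw [show m + 2 - (m + 1) = 1 from by omega, hf2]
    push_cast
    field_simp
    ring
  refine ⟨part1, ?_⟩
  intro h3
  obtain ⟨m, rfl⟩ : ∃ m, ℓ = m + 3 := ⟨ℓ - 3, by omega⟩
  have cval : c (m + 2) = ((β : ℚ) - 1) * ((m : ℚ) + 4) / 2 := by
    have := part1 (by omega)
    rw [show m + 3 - 1 = m + 2 from rfl] at this
    rw [this]; push_cast; ring
  have h := hc (m + 1) (by omega)
  rw [show m + 3 - 2 = m + 1 from rfl]
  have e1 : Finset.Icc (m + 1 + 2) (m + 3) = {m + 3} := by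
    rw [show m + 1 + 2 = m + 3 from rfl, Finset.Icc_self]
  rw [e1, Finset.sum_singleton] at h
  rw [show (m:ℕ) + 3 = (m + 1 + 1) + 1 from rfl, Finset.sum_Icc_succ_top (by omega),
    Finset.sum_Icc_succ_top (by omega), Finset.sum_Icc_succ_top (by omega),
    Finset.Icc_eq_empty (by omega), Finset.sum_empty] at h
  rw [show m + 1 + 1 + 1 = (m + 1 + 1) + 1 from rfl, Finset.sum_Icc_succ_top (by omega),
    Finset.Icc_self, Finset.sum_singleton] at h
  simp only [show m+1+1 = m+2 from rfl, show m+2+1 = m+3 from rfl,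
    show m+3-1 = m+2 from rfl, show m+3-(m+1) = 2 from by omega,
    show m+2-(m+1) = 1 from by omega] at h
  rw [show (m:ℕ)+3 = (m+1)+2 from rfl] at h
  rw [S1_Q1, S1_Q2, S1_Q3, show (m:ℕ)+1+2 = (m+2)+1 from rfl, S1_Q2 (m+1),
    S1_Q1 (m+2)] at h
  have hf1 : ((m+1).factorial : ℚ) ≠ 0 := Nat.cast_ne_zero.mpr (Nat.factorial_ne_zero _)
  have hf2 : ((m+2).factorial : ℚ) = ((m:ℚ)+2) * ((m+1).factorial : ℚ) := by
    rw [show (m:ℕ)+2 = (m+1)+1 from rfl, Nat.factorial_succ]; push_cast; ring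
  have hf3 : (((m:ℕ)+1+2).factorial : ℚ) = ((m:ℚ)+3) * (((m:ℕ)+2).factorial : ℚ) := by
    rw [show (m:ℕ)+1+2 = (m+2)+1 from rfl, Nat.factorial_succ]; push_cast; ring
  rw [hf3, hf2, cval, Nat.factorial_one, Nat.factorial_two] at h
  rw [h]
  push_cast
  field_simp
  ring
end

section
/- Let ℓ ≥ 1 and β ≥ 1 be integers such that every prime divisor of β is strictly greater than ℓ. Then for every integer u ≥ ℓ, C(u + β^ℓ, ℓ) ≡ C(u, ℓ) (mod β^ℓ). -/
lemma modeq_prod {n : ℕ} {s : Finset ℕ} {f g : ℕ → ℕ}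
    (h : ∀ i ∈ s, f i ≡ g i [MOD n]) :
    (∏ i ∈ s, f i) ≡ (∏ i ∈ s, g i) [MOD n] := by
  classical
  induction s using Finset.induction with
  | empty => simp [Nat.ModEq.refl]
  | @insert a s hx ih =>
    rw [Finset.prod_insert hx, Finset.prod_insert hx]
    exact (h a (Finset.mem_insert_self a s)).mul
      (ih fun i hi => h i (Finset.mem_insert_of_mem hi))

/-- If every prime divisor of `β` is greater than `ℓ`, then
`C(u + β^ℓ, ℓ) ≡ C(u, ℓ) (mod β^ℓ)` for all `u ≥ ℓ`. -/
theorem choose_add_pow_mod (ℓ β : ℕ) (hℓ : 1 ≤ ℓ) (hβ : 1 ≤ β)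
    (hprime : ∀ p : ℕ, p.Prime → p ∣ β → ℓ < p) (u : ℕ) (hu : ℓ ≤ u) :
    Nat.choose (u + β ^ ℓ) ℓ ≡ Nat.choose u ℓ [MOD β ^ ℓ] := by
  set m := β ^ ℓ with hm
  have hcopβ : Nat.Coprime (Nat.factorial ℓ) β := by
    by_contra h
    have hg : Nat.gcd (Nat.factorial ℓ) β ≠ 1 := h
    have hgpos : 0 < Nat.gcd (Nat.factorial ℓ) β := Nat.gcd_pos_of_pos_right _ hβ
    set p := (Nat.gcd (Nat.factorial ℓ) β).minFac with hp
    have hpp : p.Prime := Nat.minFac_prime hg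
    have hpf : p ∣ Nat.factorial ℓ := (Nat.minFac_dvd _).trans (Nat.gcd_dvd_left _ _)
    have hpb : p ∣ β := (Nat.minFac_dvd _).trans (Nat.gcd_dvd_right _ _)
    have h1 : ℓ < p := hprime p hpp hpb
    have h2 : p ≤ ℓ := (Nat.Prime.dvd_factorial hpp).mp hpf
    omega
  have hcop : Nat.gcd m (Nat.factorial ℓ) = 1 := by
    rw [Nat.gcd_comm]
    exact hcopβ.pow_right ℓ
  have key : (u + m).descFactorial ℓ ≡ u.descFactorial ℓ [MOD m] := by
    rw [Nat.descFactorial_eq_prod_range, Nat.descFactorial_eq_prod_range]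
    apply modeq_prod
    intro i hi
    have hil : i < ℓ := Finset.mem_range.mp hi
    have : u + m - i = (u - i) + m := by omega
    rw [this]
    exact Nat.add_modEq_right
  rw [Nat.descFactorial_eq_factorial_mul_choose, Nat.descFactorial_eq_factorial_mul_choose] at key
  exact Nat.ModEq.cancel_left_of_coprime hcop key
end
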